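/- The Fisher–Rao distance between two univariate Gaussian distributions N(μ₁, σ₁²) and N(μ₂, σ₂²), with σ₁, σ₂ > 0, admits the closed form d_F = √2 · arcosh( 1 + ((μ₁ − μ₂)² + 2(σ₁ − σ₂)²) / (4σ₁σ₂) ). -/

import Mathlib

open Real MeasureTheory

/-- Fisher–Rao length of a path `γ(t) = (μ(t), σ(t))`, `t ∈ [0,1]`, for the metric
`ds² = (dμ² + 2dσ²)/σ²`:  `∫₀¹ √(μ′(t)² + 2σ′(t)²) / σ(t) dt`. -/
noncomputable def fisherRaoLength (γ : ℝ → ℝ × ℝ) : ℝ :=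
  ∫ t in (0:ℝ)..1,
    Real.sqrt ((deriv (fun s => (γ s).1) t) ^ 2 + 2 * (deriv (fun s => (γ s).2) t) ^ 2) /
      (γ t).2

/-- A path `γ : [0,1] → ℝ × (0,∞)` joining `p` to `q`, C¹ on `[0,1]`, staying in the
upper half-plane `σ > 0`. -/
def IsAdmissiblePath (p q : ℝ × ℝ) (γ : ℝ → ℝ × ℝ) : Prop :=
  γ 0 = p ∧ γ 1 = q ∧ ContDiffOn ℝ 1 γ (Set.Icc 0 1) ∧
    ∀ t ∈ Set.Icc (0:ℝ) 1, 0 < (γ t).2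

/-- Fisher–Rao distance on the univariate-Gaussian manifold in `(μ, σ)` coordinates:
infimum of Fisher–Rao path lengths over admissible paths. -/
noncomputable def fisherRaoDist (p q : ℝ × ℝ) : ℝ :=
  sInf (fisherRaoLength '' {γ | IsAdmissiblePath p q γ})

/-- Inverse hyperbolic cosine. -/
noncomputable def arcosh (x : ℝ) : ℝ := Real.log (x + Real.sqrt (x ^ 2 - 1))

/- ### Auxiliary lemmas -/

lemma sinh_nonneg' {t : ℝ} (ht : 0 ≤ t) : 0 ≤ Real.sinh t := by
  rw [Real.sinh_eq]
  have : Real.exp (-t) ≤ Real.exp t := Real.exp_le_exp.2 (by linarith)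
  linarith

lemma arcosh_cosh' {t : ℝ} (ht : 0 ≤ t) : _root_.arcosh (Real.cosh t) = t := by
  have h1 : Real.cosh t ^ 2 - 1 = Real.sinh t ^ 2 := by
    have := Real.cosh_sq t; linarith
  unfold _root_.arcosh
  rw [h1, Real.sqrt_sq (sinh_nonneg' ht), Real.cosh_add_sinh, Real.log_exp]

lemma cs_aux {a b x y σ : ℝ} (hσ : 0 < σ) (hg : (σ * a)^2 + (σ * b)^2 / 2 ≤ 1) :
    a * x + b * y ≤ Real.sqrt (x^2 + 2*y^2) / σ := by
  rw [le_div_iff₀ hσ]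
  rcases le_or_gt ((a*x + b*y) * σ) 0 with h | h
  · exact h.trans (Real.sqrt_nonneg _)
  · have h3 : (0:ℝ) ≤ (1 - ((σ*a)^2 + (σ*b)^2/2)) * (x^2 + 2*y^2) :=
      mul_nonneg (by linarith) (by positivity)
    have h2 : ((a*x+b*y)*σ)^2 ≤ x^2 + 2*y^2 := by
      nlinarith [sq_nonneg (2*(σ*a)*y - (σ*b)*x)]
    exact (Real.le_sqrt h.le (by positivity)).2 h2

lemma busemann_bound (p q : ℝ × ℝ) (γ : ℝ → ℝ × ℝ) (hγ : IsAdmissiblePath p q γ)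
    (B Bμ Bσ : ℝ → ℝ → ℝ)
    (hBcont : ContinuousOn (fun x : ℝ × ℝ => B x.1 x.2) {x : ℝ × ℝ | 0 < x.2})
    (hBμcont : ContinuousOn (fun x : ℝ × ℝ => Bμ x.1 x.2) {x : ℝ × ℝ | 0 < x.2})
    (hBσcont : ContinuousOn (fun x : ℝ × ℝ => Bσ x.1 x.2) {x : ℝ × ℝ | 0 < x.2})
    (hchain : ∀ (f g : ℝ → ℝ) (t f' g' : ℝ), HasDerivAt f f' t → HasDerivAt g g' t →
      0 < g t →
      HasDerivAt (fun s => B (f s) (g s)) (Bμ (f t) (g t) * f' + Bσ (f t) (g t) * g') t)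
    (hgrad : ∀ m s : ℝ, 0 < s → (s * Bμ m s)^2 + (s * Bσ m s)^2 / 2 ≤ 1) :
    B q.1 q.2 - B p.1 p.2 ≤ fisherRaoLength γ := by
  obtain ⟨h0, h1, hC, hpos⟩ := hγ
  set f : ℝ → ℝ := fun t => (γ t).1 with hf
  set g : ℝ → ℝ := fun t => (γ t).2 with hg
  have hCf : ContDiffOn ℝ 1 f (Set.Icc 0 1) := contDiff_fst.comp_contDiffOn hC
  have hCg : ContDiffOn ℝ 1 g (Set.Icc 0 1) := contDiff_snd.comp_contDiffOn hC
  have hud : UniqueDiffOn ℝ (Set.Icc (0:ℝ) 1) := uniqueDiffOn_Icc one_pos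
  set δ1 : ℝ → ℝ := derivWithin f (Set.Icc 0 1) with hδ1
  set δ2 : ℝ → ℝ := derivWithin g (Set.Icc 0 1) with hδ2
  have hδ1c : ContinuousOn δ1 (Set.Icc 0 1) := hCf.continuousOn_derivWithin hud le_rfl
  have hδ2c : ContinuousOn δ2 (Set.Icc 0 1) := hCg.continuousOn_derivWithin hud le_rfl
  have hgc : ContinuousOn g (Set.Icc 0 1) := hCg.continuousOn
  have hγc : ContinuousOn γ (Set.Icc 0 1) := hC.continuousOn
  have hint : ∀ t ∈ Set.Ioo (0:ℝ) 1, Set.Icc (0:ℝ) 1 ∈ nhds t := fun t ht =>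
    Icc_mem_nhds ht.1 ht.2
  have hfd : ∀ t ∈ Set.Ioo (0:ℝ) 1, HasDerivAt f (δ1 t) t := by
    intro t ht
    have h := (hCf.contDiffAt (hint t ht)).differentiableAt one_ne_zero
    rw [hδ1, derivWithin_of_mem_nhds (hint t ht)]
    exact h.hasDerivAt
  have hgd : ∀ t ∈ Set.Ioo (0:ℝ) 1, HasDerivAt g (δ2 t) t := by
    intro t ht
    have h := (hCg.contDiffAt (hint t ht)).differentiableAt one_ne_zero
    rw [hδ2, derivWithin_of_mem_nhds (hint t ht)]
    exact h.hasDerivAt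
  set speed : ℝ → ℝ := fun t => Real.sqrt (δ1 t ^ 2 + 2 * δ2 t ^ 2) / g t with hspeed
  set h' : ℝ → ℝ := fun t => Bμ (f t) (g t) * δ1 t + Bσ (f t) (g t) * δ2 t with hh'
  have hmaps : ∀ t ∈ Set.Icc (0:ℝ) 1, γ t ∈ {x : ℝ × ℝ | 0 < x.2} := hpos
  have huIcc : Set.uIcc (0:ℝ) 1 = Set.Icc 0 1 := Set.uIcc_of_le zero_le_one
  have hspeedc : ContinuousOn speed (Set.Icc 0 1) := by
    apply ContinuousOn.div _ hgc (fun t ht => (hpos t ht).ne')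
    exact ((hδ1c.pow 2).add (continuousOn_const.mul (hδ2c.pow 2))).sqrt
  have hh'c : ContinuousOn h' (Set.Icc 0 1) :=
    ((hBμcont.comp hγc hmaps).mul hδ1c).add ((hBσcont.comp hγc hmaps).mul hδ2c)
  have hint1 : IntervalIntegrable h' volume 0 1 :=
    ContinuousOn.intervalIntegrable (by rwa [huIcc])
  have hint2 : IntervalIntegrable speed volume 0 1 :=
    ContinuousOn.intervalIntegrable (by rwa [huIcc])
  have hBc : ContinuousOn (fun t => B (f t) (g t)) (Set.Icc 0 1) := hBcont.comp hγc hmaps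
  have hFTC : ∫ t in (0:ℝ)..1, h' t = B (f 1) (g 1) - B (f 0) (g 0) := by
    apply intervalIntegral.integral_eq_sub_of_hasDeriv_right_of_le zero_le_one hBc _ hint1
    intro t ht
    exact ((hchain f g t (δ1 t) (δ2 t) (hfd t ht) (hgd t ht)
      (hpos t (Set.Ioo_subset_Icc_self ht))).hasDerivWithinAt)
  have hle : ∀ t ∈ Set.Icc (0:ℝ) 1, h' t ≤ speed t := fun t ht =>
    cs_aux (hpos t ht) (hgrad (f t) (g t) (hpos t ht))
  have hmono : ∫ t in (0:ℝ)..1, h' t ≤ ∫ t in (0:ℝ)..1, speed t :=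
    intervalIntegral.integral_mono_on zero_le_one hint1 hint2 hle
  have hexp : fisherRaoLength γ =
      ∫ t in (0:ℝ)..1, Real.sqrt ((deriv f t) ^ 2 + 2 * (deriv g t) ^ 2) / g t := rfl
  have hfin : ∫ t in (0:ℝ)..1, speed t = fisherRaoLength γ := by
    rw [hexp]
    apply intervalIntegral.integral_congr_ae
    have hne : ∀ᵐ x : ℝ ∂volume, x ≠ 1 := by
      rw [MeasureTheory.ae_iff]
      simp only [not_not, Set.setOf_eq_eq_singleton]
      exact Real.volume_singleton
    filter_upwards [hne] with t ht hmem
    rw [Set.uIoc_of_le zero_le_one] at hmem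
    have htI : t ∈ Set.Ioo (0:ℝ) 1 := ⟨hmem.1, lt_of_le_of_ne hmem.2 ht⟩
    show speed t = _
    rw [hspeed]
    simp only
    rw [hδ1, hδ2, derivWithin_of_mem_nhds (hint t htI), derivWithin_of_mem_nhds (hint t htI)]
  have hend : B q.1 q.2 - B p.1 p.2 = B (f 1) (g 1) - B (f 0) (g 0) := by
    rw [hf, hg]; simp only [h0, h1]
  rw [hend, ← hFTC]
  exact hmono.trans_eq hfin

lemma lower_vert (k : ℝ) (hk : k^2 ≤ 2) (p q : ℝ × ℝ) (γ : ℝ → ℝ × ℝ)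
    (hγ : IsAdmissiblePath p q γ) :
    k * Real.log q.2 - k * Real.log p.2 ≤ fisherRaoLength γ := by
  have := busemann_bound p q γ hγ (fun _ s => k * Real.log s) (fun _ _ => 0)
    (fun _ s => k / s) ?_ ?_ ?_ ?_ ?_
  · exact this
  · exact continuousOn_const.mul (Real.continuousOn_log.comp continuousOn_snd
      (fun x hx => by simpa using ne_of_gt hx))
  · exact continuousOn_const
  · exact continuousOn_const.div continuousOn_snd (fun x hx => ne_of_gt hx)
  · intro f g t f' g' hf hg hgt
    have h := (hg.log hgt.ne').const_mul k
    refine h.congr_deriv ?_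
    ring
  · intro m s hs
    have : s * (k / s) = k := by field_simp
    rw [this]
    nlinarith

lemma lower_circ (ξ : ℝ) (p q : ℝ × ℝ) (γ : ℝ → ℝ × ℝ)
    (hγ : IsAdmissiblePath p q γ) :
    Real.sqrt 2 * (Real.log ((q.1 - ξ)^2/2 + q.2^2) - Real.log q.2) -
      Real.sqrt 2 * (Real.log ((p.1 - ξ)^2/2 + p.2^2) - Real.log p.2) ≤
      fisherRaoLength γ := by
  have h2 : (Real.sqrt 2)^2 = 2 := Real.sq_sqrt (by norm_num)
  have hA : ∀ x : ℝ × ℝ, x ∈ {x : ℝ × ℝ | 0 < x.2} → (0:ℝ) < (x.1 - ξ)^2/2 + x.2^2 := by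
    intro x hx
    have : (0:ℝ) < x.2 := hx
    positivity
  have := busemann_bound p q γ hγ
    (fun m s => Real.sqrt 2 * (Real.log ((m - ξ)^2/2 + s^2) - Real.log s))
    (fun m s => Real.sqrt 2 * ((m - ξ)/((m - ξ)^2/2 + s^2)))
    (fun m s => Real.sqrt 2 * (2*s/((m - ξ)^2/2 + s^2) - 1/s))
    ?_ ?_ ?_ ?_ ?_
  · exact this
  · apply continuousOn_const.mul
    apply ContinuousOn.sub
    · apply Real.continuousOn_log.comp
      · exact (((continuousOn_fst.sub continuousOn_const).pow 2).div_const 2).add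
          (continuousOn_snd.pow 2)
      · exact fun x hx => ne_of_gt (hA x hx)
    · exact Real.continuousOn_log.comp continuousOn_snd
        (fun x hx => by simpa using ne_of_gt hx)
  · apply continuousOn_const.mul
    exact (continuousOn_fst.sub continuousOn_const).div
      ((((continuousOn_fst.sub continuousOn_const).pow 2).div_const 2).add
        (continuousOn_snd.pow 2)) (fun x hx => ne_of_gt (hA x hx))
  · apply continuousOn_const.mul
    apply ContinuousOn.sub
    · exact (continuousOn_const.mul continuousOn_snd).div
        ((((continuousOn_fst.sub continuousOn_const).pow 2).div_const 2).add
          (continuousOn_snd.pow 2)) (fun x hx => ne_of_gt (hA x hx))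
    · exact continuousOn_const.div continuousOn_snd (fun x hx => ne_of_gt hx)
  · intro f g t f' g' hf hg hgt
    have hApos : (0:ℝ) < (f t - ξ)^2/2 + (g t)^2 := hA (f t, g t) hgt
    have hu : HasDerivAt (fun s => (f s - ξ)^2/2 + (g s)^2)
        ((2 * (f t - ξ)^1 * f')/2 + 2 * (g t)^1 * g') t :=
      (((hf.sub_const ξ).pow 2).div_const 2).add (hg.pow 2)
    have hlog := hu.log hApos.ne'
    have hlogg := hg.log hgt.ne'
    have := (hlog.sub hlogg).const_mul (Real.sqrt 2)
    refine this.congr_deriv ?_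
    field_simp
    ring
  · intro m s hs
    have hApos : (0:ℝ) < (m - ξ)^2/2 + s^2 := hA (m, s) hs
    apply le_of_eq
    have e1 : (s * (Real.sqrt 2 * ((m - ξ)/((m - ξ)^2/2 + s^2))))^2
        = 2 * (s * ((m - ξ)/((m - ξ)^2/2 + s^2)))^2 := by
      rw [show s * (Real.sqrt 2 * ((m - ξ)/((m - ξ)^2/2 + s^2)))
          = Real.sqrt 2 * (s * ((m - ξ)/((m - ξ)^2/2 + s^2))) by ring, mul_pow, h2]
    have e2 : (s * (Real.sqrt 2 * (2*s/((m - ξ)^2/2 + s^2) - 1/s)))^2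
        = 2 * (s * (2*s/((m - ξ)^2/2 + s^2) - 1/s))^2 := by
      rw [show s * (Real.sqrt 2 * (2*s/((m - ξ)^2/2 + s^2) - 1/s))
          = Real.sqrt 2 * (s * (2*s/((m - ξ)^2/2 + s^2) - 1/s)) by ring, mul_pow, h2]
    rw [e1, e2]
    field_simp
    ring

lemma length_vert (μ σ₁ L : ℝ) (hσ₁ : 0 < σ₁) :
    fisherRaoLength (fun t => (μ, σ₁ * Real.exp (t * L))) = Real.sqrt 2 * |L| := by
  have h2sq : (Real.sqrt 2)^2 = 2 := Real.sq_sqrt (by norm_num)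
  unfold fisherRaoLength
  rw [intervalIntegral.integral_congr (g := fun _ => Real.sqrt 2 * |L|) ?_]
  · rw [intervalIntegral.integral_const]; simp
  intro t _
  simp only
  have h1 : (fun s : ℝ => ((μ, σ₁ * Real.exp (s * L)) : ℝ × ℝ).1) = fun _ => μ := rfl
  have h2 : (fun s : ℝ => ((μ, σ₁ * Real.exp (s * L)) : ℝ × ℝ).2)
      = fun s => σ₁ * Real.exp (s * L) := rfl
  rw [h1, h2, deriv_const]
  have hG : HasDerivAt (fun s : ℝ => σ₁ * Real.exp (s * L)) (σ₁ * Real.exp (t*L) * L) t := by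
    have := ((hasDerivAt_id t).mul_const L).exp.const_mul σ₁
    refine this.congr_deriv ?_
    simp only [id_eq]
    ring
  rw [hG.deriv]
  have hc : (0:ℝ) < σ₁ * Real.exp (t*L) := by positivity
  have e1 : (0:ℝ)^2 + 2*(σ₁ * Real.exp (t*L) * L)^2
      = (Real.sqrt 2 * (σ₁ * Real.exp (t*L)) * |L|)^2 := by
    rw [show (Real.sqrt 2 * (σ₁ * Real.exp (t*L)) * |L|)^2
        = (Real.sqrt 2)^2 * ((σ₁ * Real.exp (t*L))^2 * |L|^2) by ring, h2sq, sq_abs]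
    ring
  rw [e1, Real.sqrt_sq (by positivity)]
  field_simp

lemma length_circ (c r s₁ s₂ : ℝ) (hr : 0 < r) :
    fisherRaoLength (fun t =>
      (c + Real.sqrt 2 * r * (Real.sinh (s₁ + t*(s₂ - s₁)) / Real.cosh (s₁ + t*(s₂ - s₁))),
        r / Real.cosh (s₁ + t*(s₂ - s₁)))) = Real.sqrt 2 * |s₂ - s₁| := by
  have h2sq : (Real.sqrt 2)^2 = 2 := Real.sq_sqrt (by norm_num)
  set k := s₂ - s₁ with hk
  unfold fisherRaoLength
  rw [intervalIntegral.integral_congr (g := fun _ => Real.sqrt 2 * |k|) ?_]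
  · rw [intervalIntegral.integral_const]; simp
  intro t _
  simp only
  set st : ℝ → ℝ := fun u => s₁ + u * k with hstdef
  have hst : HasDerivAt st (1 * k) t := ((hasDerivAt_id t).mul_const k).const_add s₁
  set cst := Real.cosh (st t) with hcst
  set snt := Real.sinh (st t) with hsnt
  have hcpos : 0 < cst := Real.cosh_pos _
  have hident : cst^2 - snt^2 = 1 := Real.cosh_sq_sub_sinh_sq _
  have hsinh : HasDerivAt (fun u => Real.sinh (st u)) (cst * (1 * k)) t :=
    (Real.hasDerivAt_sinh (st t)).comp t hst
  have hcosh : HasDerivAt (fun u => Real.cosh (st u)) (snt * (1 * k)) t :=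
    (Real.hasDerivAt_cosh (st t)).comp t hst
  have hF : HasDerivAt (fun u => c + Real.sqrt 2 * r * (Real.sinh (st u) / Real.cosh (st u)))
      (Real.sqrt 2 * r * ((cst * (1 * k) * cst - snt * (snt * (1 * k))) / cst ^ 2)) t :=
    ((hsinh.div hcosh hcpos.ne').const_mul (Real.sqrt 2 * r)).const_add c
  have hG : HasDerivAt (fun u => r / Real.cosh (st u))
      ((0 * cst - r * (snt * (1 * k))) / cst ^ 2) t :=
    (hasDerivAt_const t r).div hcosh hcpos.ne'
  rw [hF.deriv, hG.deriv]
  have eF : Real.sqrt 2 * r * ((cst * (1 * k) * cst - snt * (snt * (1 * k))) / cst ^ 2)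
      = Real.sqrt 2 * (r * k / cst ^ 2) := by
    rw [show cst * (1 * k) * cst - snt * (snt * (1 * k)) = k * (cst^2 - snt^2) by ring, hident]
    ring
  have eG : (0 * cst - r * (snt * (1 * k))) / cst ^ 2 = -(r * snt * k) / cst ^ 2 := by
    ring_nf
  rw [eF, eG]
  have h1s : (1:ℝ) + snt^2 = cst^2 := by linarith
  have esum : (Real.sqrt 2 * (r * k / cst ^ 2))^2 + 2 * (-(r * snt * k) / cst ^ 2)^2
      = (Real.sqrt 2 * (r / cst) * |k|)^2 := by
    have e2 : (Real.sqrt 2 * (r * k / cst ^ 2))^2 + 2 * (-(r * snt * k) / cst ^ 2)^2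
        = 2 * (r*k)^2 * (1 + snt^2) / cst^4 := by
      rw [show (Real.sqrt 2 * (r * k / cst ^ 2))^2
          = (Real.sqrt 2)^2 * (r * k / cst ^ 2)^2 by ring, h2sq]
      field_simp
    have e3 : (Real.sqrt 2 * (r / cst) * |k|)^2 = 2 * ((r / cst)^2 * k^2) := by
      rw [show (Real.sqrt 2 * (r / cst) * |k|)^2
          = (Real.sqrt 2)^2 * ((r / cst)^2 * |k|^2) by ring, h2sq, sq_abs]
    rw [e2, e3, h1s]
    field_simp
  rw [esum, Real.sqrt_sq (by positivity)]
  field_simp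

/-- Closed form of the Fisher–Rao distance between `N(μ₁,σ₁²)` and `N(μ₂,σ₂²)`:
`d_F = √2 · arcosh(1 + ((μ₁−μ₂)² + 2(σ₁−σ₂)²)/(4σ₁σ₂))`. -/
theorem fisherRaoDist_gaussian_closed_form (μ₁ μ₂ σ₁ σ₂ : ℝ)
    (hσ₁ : 0 < σ₁) (hσ₂ : 0 < σ₂) :
    fisherRaoDist (μ₁, σ₁) (μ₂, σ₂) =
      Real.sqrt 2 *
        _root_.arcosh (1 + ((μ₁ - μ₂) ^ 2 + 2 * (σ₁ - σ₂) ^ 2) / (4 * σ₁ * σ₂)) := by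
  have h2sq : (Real.sqrt 2)^2 = 2 := Real.sq_sqrt (by norm_num)
  have h2ne : Real.sqrt 2 ≠ 0 := by positivity
  obtain ⟨K, hK0, hcoshK, γ₀, hγ₀, hlen, hlow⟩ :
      ∃ K : ℝ, 0 ≤ K ∧
        Real.cosh K = 1 + ((μ₁ - μ₂) ^ 2 + 2 * (σ₁ - σ₂) ^ 2) / (4 * σ₁ * σ₂) ∧
        ∃ γ₀ : ℝ → ℝ × ℝ, IsAdmissiblePath (μ₁, σ₁) (μ₂, σ₂) γ₀ ∧
          fisherRaoLength γ₀ = Real.sqrt 2 * K ∧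
          ∀ γ, IsAdmissiblePath (μ₁, σ₁) (μ₂, σ₂) γ → Real.sqrt 2 * K ≤ fisherRaoLength γ := by
    by_cases hne : μ₁ = μ₂
    · -- vertical geodesic
      obtain ⟨L, hL⟩ : ∃ L : ℝ, L = Real.log σ₂ - Real.log σ₁ := ⟨_, rfl⟩
      have hexpL : Real.exp L = σ₂ / σ₁ := by
        rw [hL, Real.exp_sub, Real.exp_log hσ₂, Real.exp_log hσ₁]
      have hexpnL : Real.exp (-L) = σ₁ / σ₂ := by
        rw [hL, neg_sub, Real.exp_sub, Real.exp_log hσ₁, Real.exp_log hσ₂]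
      refine ⟨|L|, abs_nonneg _, ?_, fun t => (μ₁, σ₁ * Real.exp (t * L)), ⟨?_, ?_, ?_, ?_⟩,
        ?_, ?_⟩
      · rw [Real.cosh_abs, Real.cosh_eq, hexpL, hexpnL, hne]
        field_simp
        ring
      · simp
      · have he : σ₁ * Real.exp (1 * L) = σ₂ := by
          rw [one_mul, hexpL]; field_simp
        simp only [he, hne]
      · exact ContDiff.contDiffOn (by fun_prop)
      · intro t _
        have : 0 < σ₁ * Real.exp (t * L) := by positivity
        simpa using this
      · exact length_vert μ₁ σ₁ L hσ₁
      · intro γ hγ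
        have l1 : Real.sqrt 2 * Real.log σ₂ - Real.sqrt 2 * Real.log σ₁ ≤ fisherRaoLength γ :=
          lower_vert (Real.sqrt 2) (le_of_eq h2sq) (μ₁, σ₁) (μ₂, σ₂) γ hγ
        have l2 : (-Real.sqrt 2) * Real.log σ₂ - (-Real.sqrt 2) * Real.log σ₁ ≤
            fisherRaoLength γ :=
          lower_vert (-Real.sqrt 2) (by nlinarith) (μ₁, σ₁) (μ₂, σ₂) γ hγ
        rcases abs_cases L with ⟨h, _⟩ | ⟨h, _⟩ <;> rw [h]
        · have : Real.sqrt 2 * L = Real.sqrt 2 * Real.log σ₂ - Real.sqrt 2 * Real.log σ₁ := by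
            rw [hL]; ring
          linarith
        · have : Real.sqrt 2 * (-L)
              = (-Real.sqrt 2) * Real.log σ₂ - (-Real.sqrt 2) * Real.log σ₁ := by
            rw [hL]; ring
          linarith
    · -- circular geodesic
      have hsub : μ₁ - μ₂ ≠ 0 := sub_ne_zero.2 hne
      obtain ⟨c, hc⟩ : ∃ c : ℝ,
          c = (μ₁^2 + 2*σ₁^2 - μ₂^2 - 2*σ₂^2) / (2*(μ₁ - μ₂)) := ⟨_, rfl⟩
      obtain ⟨r, hrdef⟩ : ∃ r : ℝ, r = Real.sqrt ((μ₁ - c)^2/2 + σ₁^2) := ⟨_, rfl⟩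
      have hrpos : 0 < r := by
        rw [hrdef]; exact Real.sqrt_pos.2 (by positivity)
      have hr1 : r^2 = (μ₁ - c)^2/2 + σ₁^2 := by
        rw [hrdef]; exact Real.sq_sqrt (by positivity)
      have hkey : (μ₁ - c)^2/2 + σ₁^2 = (μ₂ - c)^2/2 + σ₂^2 := by
        rw [hc]; field_simp; ring
      have hr2 : r^2 = (μ₂ - c)^2/2 + σ₂^2 := hr1.trans hkey
      obtain ⟨a₁, ha₁⟩ : ∃ a : ℝ, a = Real.arsinh ((μ₁ - c)/(Real.sqrt 2 * σ₁)) := ⟨_, rfl⟩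
      obtain ⟨a₂, ha₂⟩ : ∃ a : ℝ, a = Real.arsinh ((μ₂ - c)/(Real.sqrt 2 * σ₂)) := ⟨_, rfl⟩
      have hs1 : Real.sinh a₁ = (μ₁ - c)/(Real.sqrt 2 * σ₁) := by
        rw [ha₁]; exact Real.sinh_arsinh _
      have hs2 : Real.sinh a₂ = (μ₂ - c)/(Real.sqrt 2 * σ₂) := by
        rw [ha₂]; exact Real.sinh_arsinh _
      have hc1 : Real.cosh a₁ = r / σ₁ := by
        rw [ha₁, Real.cosh_arsinh]
        rw [show 1 + ((μ₁ - c)/(Real.sqrt 2 * σ₁))^2 = (r/σ₁)^2 by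
          rw [show ((μ₁ - c)/(Real.sqrt 2 * σ₁))^2
              = (μ₁ - c)^2/((Real.sqrt 2)^2 * σ₁^2) by rw [div_pow, mul_pow], h2sq, div_pow]
          field_simp
          linear_combination (-2)*hr1]
        exact Real.sqrt_sq (by positivity)
      have hc2 : Real.cosh a₂ = r / σ₂ := by
        rw [ha₂, Real.cosh_arsinh]
        rw [show 1 + ((μ₂ - c)/(Real.sqrt 2 * σ₂))^2 = (r/σ₂)^2 by
          rw [show ((μ₂ - c)/(Real.sqrt 2 * σ₂))^2
              = (μ₂ - c)^2/((Real.sqrt 2)^2 * σ₂^2) by rw [div_pow, mul_pow], h2sq, div_pow]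
          field_simp
          linear_combination (-2)*hr2]
        exact Real.sqrt_sq (by positivity)
      have key : ∀ (m s aa e : ℝ), 0 < s → (e = 1 ∨ e = -1) →
          Real.sinh aa = (m - c)/(Real.sqrt 2 * s) → Real.cosh aa = r / s →
          r^2 = (m - c)^2/2 + s^2 →
          Real.log ((m - (c + e * (Real.sqrt 2 * r)))^2/2 + s^2)
            = Real.log s + (Real.log (2*r) + (-e) * aa) := by
        intro m s aa e hs he hsinh hcosh hrr
        have he2 : e^2 = 1 := by rcases he with rfl | rfl <;> norm_num
        have hexp : Real.exp ((-e) * aa) = Real.cosh aa - e * Real.sinh aa := by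
          rcases he with rfl | rfl
          · simpa using (Real.cosh_sub_sinh aa).symm
          · simpa using (Real.cosh_add_sinh aa).symm
        have hss : Real.sqrt 2 * (s * Real.sinh aa) = m - c := by
          rw [hsinh]; field_simp
        have hsc : s * Real.cosh aa = r := by
          rw [hcosh]; field_simp
        have hstep : s * (2*r*Real.exp ((-e) * aa))
            = 2*(s*Real.cosh aa)*r
              - Real.sqrt 2 * e * r * (Real.sqrt 2 * (s*Real.sinh aa)) := by
          rw [hexp]
          linear_combination (e*r*(s*Real.sinh aa)) * h2sq
        have hA : (m - (c + e * (Real.sqrt 2 * r)))^2/2 + s^2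
            = s * (2*r*Real.exp ((-e) * aa)) := by
          rw [hstep, hss, hsc]
          linear_combination (-1)*hrr + ((Real.sqrt 2)^2*r^2/2)*he2 + (r^2/2)*h2sq
        rw [hA, Real.log_mul hs.ne'
            (ne_of_gt (mul_pos (by linarith) (Real.exp_pos _))),
          Real.log_mul (ne_of_gt (by linarith : (0:ℝ) < 2*r)) (Real.exp_ne_zero _),
          Real.log_exp]
      refine ⟨|a₂ - a₁|, abs_nonneg _, ?_, fun t =>
        (c + Real.sqrt 2 * r * (Real.sinh (a₁ + t*(a₂ - a₁)) / Real.cosh (a₁ + t*(a₂ - a₁))),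
          r / Real.cosh (a₁ + t*(a₂ - a₁))), ⟨?_, ?_, ?_, ?_⟩, ?_, ?_⟩
      · rw [Real.cosh_abs, Real.cosh_sub, hc1, hc2, hs1, hs2]
        have hpoly : 4*r^2 - 2*((μ₂-c)*(μ₁-c))
            = 4*σ₁*σ₂ + ((μ₁-μ₂)^2 + 2*(σ₁-σ₂)^2) := by
          linear_combination 2*hr1 + 2*hr2
        have e : r/σ₂*(r/σ₁) - (μ₂-c)/(Real.sqrt 2*σ₂) * ((μ₁-c)/(Real.sqrt 2*σ₁))
            = (4*r^2 - 2*((μ₂-c)*(μ₁-c)))/(4*σ₁*σ₂) := by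
          rw [div_mul_div_comm, div_mul_div_comm, show Real.sqrt 2*σ₂*(Real.sqrt 2*σ₁)
              = 2*(σ₂*σ₁) by
            rw [show Real.sqrt 2*σ₂*(Real.sqrt 2*σ₁)
                = (Real.sqrt 2)^2*(σ₂*σ₁) by ring, h2sq]]
          field_simp
          ring
        rw [e, hpoly]
        field_simp
      · show (c + Real.sqrt 2 * r *
            (Real.sinh (a₁ + 0*(a₂ - a₁)) / Real.cosh (a₁ + 0*(a₂ - a₁))),
            r / Real.cosh (a₁ + 0*(a₂ - a₁))) = ((μ₁ : ℝ), σ₁)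
        rw [show a₁ + 0*(a₂ - a₁) = a₁ by ring, Prod.mk.injEq]
        constructor
        · rw [hs1, hc1]; field_simp; ring
        · rw [hc1]; field_simp
      · show (c + Real.sqrt 2 * r *
            (Real.sinh (a₁ + 1*(a₂ - a₁)) / Real.cosh (a₁ + 1*(a₂ - a₁))),
            r / Real.cosh (a₁ + 1*(a₂ - a₁))) = ((μ₂ : ℝ), σ₂)
        rw [show a₁ + 1*(a₂ - a₁) = a₂ by ring, Prod.mk.injEq]
        constructor
        · rw [hs2, hc2]; field_simp; ring
        · rw [hc2]; field_simp
      · apply ContDiff.contDiffOn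
        have hstC : ContDiff ℝ 1 (fun t : ℝ => a₁ + t*(a₂ - a₁)) := by fun_prop
        have hcoshC : ContDiff ℝ 1 (fun t : ℝ => Real.cosh (a₁ + t*(a₂ - a₁))) :=
          Real.contDiff_cosh.comp hstC
        have hsinhC : ContDiff ℝ 1 (fun t : ℝ => Real.sinh (a₁ + t*(a₂ - a₁))) :=
          Real.contDiff_sinh.comp hstC
        exact ContDiff.prodMk (contDiff_const.add (contDiff_const.mul
            (hsinhC.div hcoshC (fun t => (Real.cosh_pos _).ne'))))
          (contDiff_const.div hcoshC (fun t => (Real.cosh_pos _).ne'))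
      · intro t _
        exact div_pos hrpos (Real.cosh_pos _)
      · exact length_circ c r a₁ a₂ hrpos
      · intro γ hγ
        have l1 : Real.sqrt 2 * (Real.log ((μ₂ - (c + 1 * (Real.sqrt 2 * r)))^2/2 + σ₂^2)
              - Real.log σ₂)
            - Real.sqrt 2 * (Real.log ((μ₁ - (c + 1 * (Real.sqrt 2 * r)))^2/2 + σ₁^2)
              - Real.log σ₁) ≤ fisherRaoLength γ :=
          lower_circ (c + 1 * (Real.sqrt 2 * r)) (μ₁, σ₁) (μ₂, σ₂) γ hγ
        have l2 : Real.sqrt 2 * (Real.log ((μ₂ - (c + (-1) * (Real.sqrt 2 * r)))^2/2 + σ₂^2)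
              - Real.log σ₂)
            - Real.sqrt 2 * (Real.log ((μ₁ - (c + (-1) * (Real.sqrt 2 * r)))^2/2 + σ₁^2)
              - Real.log σ₁) ≤ fisherRaoLength γ :=
          lower_circ (c + (-1) * (Real.sqrt 2 * r)) (μ₁, σ₁) (μ₂, σ₂) γ hγ
        rw [key μ₂ σ₂ a₂ 1 hσ₂ (Or.inl rfl) hs2 hc2 hr2,
          key μ₁ σ₁ a₁ 1 hσ₁ (Or.inl rfl) hs1 hc1 hr1] at l1
        rw [key μ₂ σ₂ a₂ (-1) hσ₂ (Or.inr rfl) hs2 hc2 hr2,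
          key μ₁ σ₁ a₁ (-1) hσ₁ (Or.inr rfl) hs1 hc1 hr1] at l2
        rcases abs_cases (a₂ - a₁) with ⟨h, _⟩ | ⟨h, _⟩ <;> rw [h]
        · have : Real.sqrt 2 * (a₂ - a₁)
              = Real.sqrt 2 * ((Real.log σ₂ + (Real.log (2*r) + (-(-1:ℝ)) * a₂))
                  - Real.log σ₂)
                - Real.sqrt 2 * ((Real.log σ₁ + (Real.log (2*r) + (-(-1:ℝ)) * a₁))
                  - Real.log σ₁) := by ring
          linarith
        · have : Real.sqrt 2 * (-(a₂ - a₁))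
              = Real.sqrt 2 * ((Real.log σ₂ + (Real.log (2*r) + (-(1:ℝ)) * a₂))
                  - Real.log σ₂)
                - Real.sqrt 2 * ((Real.log σ₁ + (Real.log (2*r) + (-(1:ℝ)) * a₁))
                  - Real.log σ₁) := by ring
          linarith
  have harc : _root_.arcosh (1 + ((μ₁ - μ₂) ^ 2 + 2 * (σ₁ - σ₂) ^ 2) / (4 * σ₁ * σ₂)) = K := by
    rw [← hcoshK, arcosh_cosh' hK0]
  rw [harc]
  unfold fisherRaoDist
  refine le_antisymm ?_ ?_
  · exact csInf_le ⟨Real.sqrt 2 * K, by rintro L ⟨γ, hγ, rfl⟩; exact hlow γ hγ⟩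
      ⟨γ₀, hγ₀, hlen⟩
  · refine le_csInf ⟨fisherRaoLength γ₀, γ₀, hγ₀, rfl⟩ ?_
    rintro L ⟨γ, hγ, rfl⟩
    exact hlow γ hγ
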